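/- Let A ∈ ℝ^{n×n} be stable, B ∈ ℝ^{n×m}, C ∈ ℝ^{p×n}, and let S ⊆ ℝ^{r×r} be a nonempty compact set every element of which is stable. Then there exist constants c₁ > 0 and c₂ > 0 such that for all A_r ∈ S, B_r ∈ ℝ^{r×m}, C_r ∈ ℝ^{p×r}, and ξ ∈ ℝ^{r×r}, the following holds: if X, Y ∈ ℝ^{n×r} and P, Q ∈ ℝ^{r×r} satisfy A X + X A_rᵀ + B B_rᵀ = 0, Aᵀ Y + Y A_r − Cᵀ C_r = 0, A_r P + P A_rᵀ + B_r B_rᵀ = 0, A_rᵀ Q + Q A_r + C_rᵀ C_r = 0, and if X', Y' ∈ ℝ^{n×r} and P', Q' ∈ ℝ^{r×r} satisfy A X' + X' A_rᵀ + X ξᵀ = 0, Aᵀ Y' + Y' A_r + Y ξ = 0, A_r P' + P' A_rᵀ + ξ P + P ξᵀ = 0, A_rᵀ Q' + Q' A_r + ξᵀ Q + Q ξ = 0, then ‖Q' P + Q P' + Y'ᵀ X + Yᵀ X'‖_F ≤ (c₁ + c₂ ‖B_r‖_F ‖C_r‖_F) ‖B_r‖_F ‖C_r‖_F ‖ξ‖_F.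 -/

import Mathlib

open Matrix

/-- A square real matrix is stable if every eigenvalue (as a complex matrix)
has negative real part. -/
def IsStable {r : ℕ} (A : Matrix (Fin r) (Fin r) ℝ) : Prop :=
  ∀ μ ∈ spectrum ℂ (A.map Complex.ofReal), μ.re < 0

/-- The Frobenius norm of a real matrix. -/
noncomputable def frobNorm {m n : ℕ} (M : Matrix (Fin m) (Fin n) ℝ) : ℝ :=
  Real.sqrt (Matrix.trace (Mᵀ * M))


section AuxHess
open Polynomial

lemma eval_charpoly_eq (M : Matrix (Fin k) (Fin k) ℂ) (μ : ℂ) :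
    (M.charpoly).eval μ = (Matrix.scalar (Fin k) μ - M).det := by
  rw [Matrix.charpoly, _root_.eval_det, Matrix.matPolyEquiv_charmatrix]
  congr 1
  simp

lemma root_charpoly_mem_spectrum (M : Matrix (Fin k) (Fin k) ℂ) {μ : ℂ}
    (h : (M.charpoly).IsRoot μ) : μ ∈ spectrum ℂ M := by
  rw [spectrum.mem_iff]
  intro hu
  rw [Matrix.isUnit_iff_isUnit_det, isUnit_iff_ne_zero] at hu
  apply hu
  have := eval_charpoly_eq M μ
  rw [Polynomial.IsRoot.def] at h
  rw [h] at this
  have ha : (algebraMap ℂ (Matrix (Fin k) (Fin k) ℂ)) μ = Matrix.scalar (Fin k) μ := rfl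
  rw [ha, ← this]

lemma spectrum_transpose (M : Matrix (Fin k) (Fin k) ℂ) :
    spectrum ℂ Mᵀ = spectrum ℂ M := by
  ext μ
  rw [spectrum.mem_iff, spectrum.mem_iff]
  have ha : (algebraMap ℂ (Matrix (Fin k) (Fin k) ℂ)) μ - Mᵀ
      = ((algebraMap ℂ (Matrix (Fin k) (Fin k) ℂ)) μ - M)ᵀ := by
    rw [Matrix.transpose_sub]
    congr 1
    simp [Matrix.algebraMap_eq_diagonal]
  rw [ha, Matrix.isUnit_iff_isUnit_det, Matrix.det_transpose, ← Matrix.isUnit_iff_isUnit_det]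

lemma isStable_transpose {M : Matrix (Fin k) (Fin k) ℝ} (h : IsStable M) : IsStable Mᵀ := by
  intro μ hμ
  apply h
  rwa [Matrix.transpose_map, spectrum_transpose] at hμ


lemma isUnit_aeval_prod_linear {k : ℕ} (M : Matrix (Fin k) (Fin k) ℂ) (s : Multiset ℂ)
    (h : ∀ l ∈ s, IsUnit (aeval M (X - C l))) :
    IsUnit (aeval M (s.map (fun l => X - C l)).prod) := by
  induction s using Multiset.induction with
  | empty => simp
  | cons a s ih =>
    rw [Multiset.map_cons, Multiset.prod_cons, _root_.map_mul]
    exact (h a (Multiset.mem_cons_self a s)).mul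
      (ih (fun l hl => h l (Multiset.mem_cons_of_mem hl)))

/-- key injectivity: if `A` and `Dᵀ` are stable then `A X + X D = 0` forces `X = 0`. -/
lemma sylv_eq_zero (A : Matrix (Fin a) (Fin a) ℝ) (D : Matrix (Fin b) (Fin b) ℝ)
    (hA : IsStable A) (hD : IsStable Dᵀ) (X : Matrix (Fin a) (Fin b) ℝ)
    (h : A * X + X * D = 0) : X = 0 := by
  set A' : Matrix (Fin a) (Fin a) ℂ := A.map Complex.ofReal with hA'
  set D' : Matrix (Fin b) (Fin b) ℂ := D.map Complex.ofReal with hD'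
  set X' : Matrix (Fin a) (Fin b) ℂ := X.map Complex.ofReal with hX'
  have key : A' * X' = X' * (-D') := by
    have h2 : A' * X' + X' * D' = 0 := by
      ext i j
      have h0 : (((A * X + X * D) i j : ℝ) : ℂ) = (((0 : Matrix (Fin a) (Fin b) ℝ) i j : ℝ) : ℂ) := by
        rw [h]
      simp only [Matrix.add_apply, Matrix.mul_apply, Matrix.zero_apply, Complex.ofReal_zero] at h0
      push_cast at h0
      simpa [hA', hD', hX', Matrix.add_apply, Matrix.mul_apply, Matrix.map_apply,
        Matrix.zero_apply] using h0
    rw [Matrix.mul_neg]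
    exact eq_neg_of_add_eq_zero_left h2
  have pow : ∀ q : ℕ, A' ^ q * X' = X' * (-D') ^ q := by
    intro q
    induction q with
    | zero => simp
    | succ q ih =>
      rw [pow_succ, pow_succ]
      calc A' ^ q * A' * X' = A' ^ q * (A' * X') := by rw [Matrix.mul_assoc]
        _ = A' ^ q * (X' * (-D')) := by rw [key]
        _ = (A' ^ q * X') * (-D') := by rw [Matrix.mul_assoc]
        _ = X' * (-D') ^ q * (-D') := by rw [ih]
        _ = X' * ((-D') ^ q * (-D')) := by rw [Matrix.mul_assoc]
  have poly : ∀ p : ℂ[X], aeval A' p * X' = X' * aeval (-D') p := by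
    intro p
    induction p using Polynomial.induction_on' with
    | add p q hp hq => rw [map_add, map_add, Matrix.add_mul, Matrix.mul_add, hp, hq]
    | monomial q c =>
      rw [aeval_monomial, aeval_monomial, Algebra.algebraMap_eq_smul_one,
        Algebra.algebraMap_eq_smul_one, smul_mul_assoc, smul_mul_assoc, one_mul, one_mul,
        Matrix.smul_mul, pow q, Matrix.mul_smul]
  have hch := poly A'.charpoly
  rw [Matrix.aeval_self_charpoly, Matrix.zero_mul] at hch
  have hmonic := A'.charpoly_monic
  have hsplit : Multiset.card A'.charpoly.roots = A'.charpoly.natDegree :=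
    (Polynomial.splits_iff_card_roots).1 (IsAlgClosed.splits _)
  have hfac := Polynomial.prod_multiset_X_sub_C_of_monic_of_roots_card_eq hmonic hsplit
  have hunit : IsUnit (aeval (-D') A'.charpoly) := by
    rw [← hfac]
    apply isUnit_aeval_prod_linear
    intro l hl
    have hlspec : l ∈ spectrum ℂ A' := root_charpoly_mem_spectrum A'
      ((Polynomial.mem_roots (hmonic.ne_zero)).1 hl)
    have hlre : l.re < 0 := hA l hlspec
    have hnot : (-l) ∉ spectrum ℂ D' := by
      intro hmem
      have hmem2 : (-l) ∈ spectrum ℂ (Dᵀ.map Complex.ofReal) := by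
        rwa [Matrix.transpose_map, spectrum_transpose]
      have := hD _ hmem2
      simp only [Complex.neg_re] at this
      linarith
    rw [spectrum.notMem_iff] at hnot
    have heq : (aeval (-D')) (Polynomial.X - C l) = (algebraMap ℂ _) (-l) - D' := by
      rw [map_sub, aeval_X, aeval_C, map_neg]
      abel
    rw [heq]
    exact hnot
  have hX0 : X' = 0 := by
    obtain ⟨u, hu⟩ := hunit
    have h3 : X' * (u : Matrix (Fin b) (Fin b) ℂ) = 0 := by rw [hu]; exact hch.symm
    have h4 : (X' * (u : Matrix (Fin b) (Fin b) ℂ)) * ((u⁻¹ : (Matrix (Fin b) (Fin b) ℂ)ˣ) : Matrix (Fin b) (Fin b) ℂ)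
        = (0 : Matrix (Fin a) (Fin b) ℂ) * ((u⁻¹ : (Matrix (Fin b) (Fin b) ℂ)ˣ) : Matrix (Fin b) (Fin b) ℂ) := by
      rw [h3]
    rwa [Matrix.mul_assoc, Units.mul_inv, Matrix.mul_one, Matrix.zero_mul] at h4
  ext i j
  have hcomp := congrArg (fun M => M i j) hX0
  simpa [hX', Matrix.map_apply, Complex.ofReal_eq_zero] using hcomp


lemma frobNorm_eq {a b : ℕ} (M : Matrix (Fin a) (Fin b) ℝ) :
    frobNorm M = @norm _ (Matrix.frobeniusSeminormedAddCommGroup :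
      SeminormedAddCommGroup (Matrix (Fin a) (Fin b) ℝ)).toNorm M := by
  letI := (Matrix.frobeniusSeminormedAddCommGroup :
    SeminormedAddCommGroup (Matrix (Fin a) (Fin b) ℝ))
  rw [Matrix.frobenius_norm_def, ← Real.sqrt_eq_rpow]
  unfold frobNorm
  congr 1
  rw [Finset.sum_comm]
  simp [Matrix.trace, Matrix.diag, Matrix.mul_apply, Real.norm_eq_abs, sq_abs, pow_two]

lemma frobNorm_nonneg {a b : ℕ} (M : Matrix (Fin a) (Fin b) ℝ) : 0 ≤ frobNorm M :=
  Real.sqrt_nonneg _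

lemma frobNorm_mul_le {a b c : ℕ} (M : Matrix (Fin a) (Fin b) ℝ) (N : Matrix (Fin b) (Fin c) ℝ) :
    frobNorm (M * N) ≤ frobNorm M * frobNorm N := by
  letI := (Matrix.frobeniusSeminormedAddCommGroup :
    SeminormedAddCommGroup (Matrix (Fin a) (Fin b) ℝ))
  letI := (Matrix.frobeniusSeminormedAddCommGroup :
    SeminormedAddCommGroup (Matrix (Fin b) (Fin c) ℝ))
  letI := (Matrix.frobeniusSeminormedAddCommGroup :
    SeminormedAddCommGroup (Matrix (Fin a) (Fin c) ℝ))
  rw [frobNorm_eq, frobNorm_eq, frobNorm_eq]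
  exact Matrix.frobenius_norm_mul M N

lemma frobNorm_transpose {a b : ℕ} (M : Matrix (Fin a) (Fin b) ℝ) :
    frobNorm Mᵀ = frobNorm M := by
  letI := (Matrix.frobeniusSeminormedAddCommGroup :
    SeminormedAddCommGroup (Matrix (Fin a) (Fin b) ℝ))
  letI := (Matrix.frobeniusSeminormedAddCommGroup :
    SeminormedAddCommGroup (Matrix (Fin b) (Fin a) ℝ))
  rw [frobNorm_eq, frobNorm_eq]
  exact Matrix.frobenius_norm_transpose M

lemma frobNorm_add_le {a b : ℕ} (M N : Matrix (Fin a) (Fin b) ℝ) :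
    frobNorm (M + N) ≤ frobNorm M + frobNorm N := by
  letI := (Matrix.frobeniusSeminormedAddCommGroup :
    SeminormedAddCommGroup (Matrix (Fin a) (Fin b) ℝ))
  rw [frobNorm_eq, frobNorm_eq, frobNorm_eq]
  exact norm_add_le M N

lemma frobNorm_neg {a b : ℕ} (M : Matrix (Fin a) (Fin b) ℝ) :
    frobNorm (-M) = frobNorm M := by
  letI := (Matrix.frobeniusSeminormedAddCommGroup :
    SeminormedAddCommGroup (Matrix (Fin a) (Fin b) ℝ))
  rw [frobNorm_eq, frobNorm_eq]
  exact norm_neg M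

/-- convergence of the Frobenius norm of the difference, in the product topology -/
lemma tendsto_frobNorm_sub {a b : ℕ} (M₀ : Matrix (Fin a) (Fin b) ℝ) :
    Filter.Tendsto (fun M : Matrix (Fin a) (Fin b) ℝ => frobNorm (M - M₀))
      (nhds M₀) (nhds 0) := by
  have hc : Continuous (fun M : Matrix (Fin a) (Fin b) ℝ => frobNorm (M - M₀)) := by
    unfold frobNorm
    apply Real.continuous_sqrt.comp
    apply Continuous.matrix_trace
    exact Continuous.matrix_mul (Continuous.matrix_transpose (by continuity)) (by continuity)
  have h0 : frobNorm ((M₀ : Matrix (Fin a) (Fin b) ℝ) - M₀) = 0 := by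
    simp [frobNorm]
  have := hc.tendsto M₀
  rwa [h0] at this

/-- abstract uniform-invertibility bound -/
lemma abstract_bound {E : Type*} [NormedAddCommGroup E] [NormedSpace ℝ E]
    [FiniteDimensional ℝ E] {T : Type*} [TopologicalSpace T]
    (S : Set T) (hSne : S.Nonempty) (hScpt : IsCompact S)
    (f : T → E →L[ℝ] E) (hf : Continuous f)
    (hinj : ∀ M ∈ S, Function.Injective (f M)) :
    ∃ K > 0, ∀ M ∈ S, ∀ U V : E, f M U = V → ‖U‖ ≤ K * ‖V‖ := by
  have hunit : ∀ M ∈ S, IsUnit (f M) := by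
    intro M hM
    have hbij : Function.Bijective ((f M : E →ₗ[ℝ] E)) :=
      ⟨hinj M hM, (LinearMap.injective_iff_surjective).1 (hinj M hM)⟩
    let e : E ≃L[ℝ] E :=
      (LinearEquiv.ofBijective ((f M : E →ₗ[ℝ] E)) hbij).toContinuousLinearEquiv
    have he : ∀ x, e x = f M x := fun x => rfl
    refine ⟨⟨f M, (e.symm : E →L[ℝ] E), ?_, ?_⟩, rfl⟩
    · ext x
      simp only [ContinuousLinearMap.mul_apply, ContinuousLinearMap.one_apply,
        ContinuousLinearMap.coe_coe]
      rw [← he]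
      exact e.apply_symm_apply x
    · ext x
      simp only [ContinuousLinearMap.mul_apply, ContinuousLinearMap.one_apply,
        ContinuousLinearMap.coe_coe]
      rw [← he]
      exact e.symm_apply_apply x
  have hcont : ContinuousOn (fun M => ‖Ring.inverse (f M)‖) S := by
    intro M hM
    obtain ⟨u, hu⟩ := hunit M hM
    have h1 : ContinuousAt Ring.inverse ((u : E →L[ℝ] E)) :=
      NormedRing.inverse_continuousAt u
    rw [hu] at h1
    exact ((continuous_norm.continuousAt).comp (h1.comp hf.continuousAt)).continuousWithinAt
  obtain ⟨M₀, hM₀S, hmax'⟩ := hScpt.exists_isMaxOn hSne hcont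
  have hmax : ∀ M ∈ S, ‖Ring.inverse (f M)‖ ≤ ‖Ring.inverse (f M₀)‖ := fun M hM => hmax' hM
  refine ⟨‖Ring.inverse (f M₀)‖ + 1, by positivity, ?_⟩
  intro M hM U V hUV
  obtain ⟨u, hu⟩ := hunit M hM
  have hU : U = Ring.inverse (f M) V := by
    rw [← hUV, ← hu, Ring.inverse_unit, ← ContinuousLinearMap.mul_apply, Units.inv_mul,
      ContinuousLinearMap.one_apply]
  calc ‖U‖ = ‖Ring.inverse (f M) V‖ := by rw [← hU]
    _ ≤ ‖Ring.inverse (f M)‖ * ‖V‖ := ContinuousLinearMap.le_opNorm _ _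
    _ ≤ (‖Ring.inverse (f M₀)‖ + 1) * ‖V‖ := by
        apply mul_le_mul_of_nonneg_right _ (norm_nonneg _)
        linarith [hmax M hM]


lemma family_bound {a b r : ℕ}
    (S : Set (Matrix (Fin r) (Fin r) ℝ)) (hSne : S.Nonempty) (hScpt : IsCompact S)
    (F : Matrix (Fin r) (Fin r) ℝ → Matrix (Fin a) (Fin a) ℝ)
    (G : Matrix (Fin r) (Fin r) ℝ → Matrix (Fin b) (Fin b) ℝ)
    (hF : Continuous F) (hG : Continuous G)
    (hstab : ∀ M ∈ S, IsStable (F M) ∧ IsStable ((G M)ᵀ)) :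
    ∃ K > 0, ∀ M ∈ S, ∀ U V : Matrix (Fin a) (Fin b) ℝ,
      F M * U + U * G M + V = 0 → frobNorm U ≤ K * frobNorm V := by
  letI iE : NormedAddCommGroup (Matrix (Fin a) (Fin b) ℝ) :=
    Matrix.frobeniusNormedAddCommGroup
  letI : NormedSpace ℝ (Matrix (Fin a) (Fin b) ℝ) := Matrix.frobeniusNormedSpace
  have hfr : ∀ (N : Matrix (Fin a) (Fin b) ℝ), ‖N‖ = frobNorm N :=
    fun N => (frobNorm_eq N).symm
  -- the operator family
  set f : Matrix (Fin r) (Fin r) ℝ →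
      (Matrix (Fin a) (Fin b) ℝ →L[ℝ] Matrix (Fin a) (Fin b) ℝ) :=
    fun M => LinearMap.toContinuousLinearMap
      { toFun := fun U => F M * U + U * G M
        map_add' := fun U V => by
          show F M * (U + V) + (U + V) * G M = _
          rw [Matrix.mul_add, Matrix.add_mul]; abel
        map_smul' := fun c U => by
          show F M * (c • U) + (c • U) * G M = _
          rw [Matrix.mul_smul, Matrix.smul_mul, RingHom.id_apply, smul_add] } with hfdef
  have fapp : ∀ M U, f M U = F M * U + U * G M := fun _ _ => rfl
  have hcont : Continuous f := by
    rw [continuous_iff_continuousAt]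
    intro M₀
    letI : SeminormedAddCommGroup (Matrix (Fin a) (Fin b) ℝ →L[ℝ] Matrix (Fin a) (Fin b) ℝ) :=
      ContinuousLinearMap.toSeminormedAddCommGroup
    rw [ContinuousAt]; refine (tendsto_iff_norm_sub_tendsto_zero (E := Matrix (Fin a) (Fin b) ℝ →L[ℝ] Matrix (Fin a) (Fin b) ℝ)).2 ?_
    apply squeeze_zero (fun M => norm_nonneg _)
      (g := fun M => frobNorm (F M - F M₀) + frobNorm (G M - G M₀))
    · intro M
      apply ContinuousLinearMap.opNorm_le_bound _
        (add_nonneg (frobNorm_nonneg _) (frobNorm_nonneg _))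
      intro U
      have heq : (f M - f M₀) U = (F M - F M₀) * U + U * (G M - G M₀) := by
        rw [ContinuousLinearMap.sub_apply, fapp, fapp, Matrix.sub_mul, Matrix.mul_sub]
        abel
      erw [heq]; rw [hfr, hfr]
      calc frobNorm ((F M - F M₀) * U + U * (G M - G M₀))
          ≤ frobNorm ((F M - F M₀) * U) + frobNorm (U * (G M - G M₀)) :=
            frobNorm_add_le _ _
        _ ≤ frobNorm (F M - F M₀) * frobNorm U + frobNorm U * frobNorm (G M - G M₀) := by
            exact add_le_add (frobNorm_mul_le _ _) (frobNorm_mul_le _ _)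
        _ ≤ (frobNorm (F M - F M₀) + frobNorm (G M - G M₀)) * frobNorm U := by
            ring_nf; nlinarith [frobNorm_nonneg (F M - F M₀), frobNorm_nonneg (G M - G M₀),
              frobNorm_nonneg U]
    · have h1 : Filter.Tendsto (fun M => frobNorm (F M - F M₀)) (nhds M₀) (nhds 0) :=
        (tendsto_frobNorm_sub (F M₀)).comp (hF.tendsto M₀)
      have h2 : Filter.Tendsto (fun M => frobNorm (G M - G M₀)) (nhds M₀) (nhds 0) :=
        (tendsto_frobNorm_sub (G M₀)).comp (hG.tendsto M₀)
      simpa using h1.add h2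
  have hinj : ∀ M ∈ S, Function.Injective (f M) := by
    intro M hM U U' hUU'
    rw [fapp, fapp] at hUU'
    have h3 : F M * (U - U') + (U - U') * G M = 0 := by
      rw [Matrix.mul_sub, Matrix.sub_mul]
      calc F M * U - F M * U' + (U * G M - U' * G M)
          = (F M * U + U * G M) - (F M * U' + U' * G M) := by abel
        _ = 0 := by rw [hUU']; exact sub_self _
    have h4 := sylv_eq_zero (F M) (G M) (hstab M hM).1 (hstab M hM).2 _ h3
    exact sub_eq_zero.mp h4
  obtain ⟨K, hKpos, hK⟩ := abstract_bound S hSne hScpt f hcont hinj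
  refine ⟨K, hKpos, ?_⟩
  intro M hM U V heq
  have h5 : f M U = -V := by
    rw [fapp]
    have := congrArg (fun W => W - V) heq
    simpa [add_sub_cancel_right] using this
  have h6 := hK M hM U (-V) h5
  rw [hfr, hfr] at h6
  have h7 : frobNorm (-V) = frobNorm V := by
    rw [frobNorm_eq, frobNorm_eq]
    exact norm_neg V
  rwa [h7] at h6

private lemma le_scale {k K v w u : ℝ} (hkK : k ≤ K) (hvw : v ≤ w) (hv : 0 ≤ v) (hK : 0 ≤ K)
    (hu : u ≤ k * v) : u ≤ K * w := hu.trans (mul_le_mul hkK hvw hv hK)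


end AuxHess

/-- bound on the Hessian `Q' P + Q P' + Y'ᵀ X + Yᵀ X'` of the H²
objective with respect to `A_r` in the direction `ξ`, uniformly over a compact
set `S` of stable matrices. -/

theorem hessA_bound {n m p r : ℕ}
    (A : Matrix (Fin n) (Fin n) ℝ) (hA : IsStable A)
    (B : Matrix (Fin n) (Fin m) ℝ) (C : Matrix (Fin p) (Fin n) ℝ)
    (S : Set (Matrix (Fin r) (Fin r) ℝ)) (hSne : S.Nonempty)
    (hScpt : IsCompact S) (hSstable : ∀ M ∈ S, IsStable M) :
    ∃ c₁ > (0 : ℝ), ∃ c₂ > (0 : ℝ),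
      ∀ A_r ∈ S,
      ∀ (B_r : Matrix (Fin r) (Fin m) ℝ) (C_r : Matrix (Fin p) (Fin r) ℝ)
        (ξ : Matrix (Fin r) (Fin r) ℝ)
        (X Y X' Y' : Matrix (Fin n) (Fin r) ℝ)
        (P Q P' Q' : Matrix (Fin r) (Fin r) ℝ),
        A * X + X * A_rᵀ + B * B_rᵀ = 0 →
        Aᵀ * Y + Y * A_r - Cᵀ * C_r = 0 →
        A_r * P + P * A_rᵀ + B_r * B_rᵀ = 0 →
        A_rᵀ * Q + Q * A_r + C_rᵀ * C_r = 0 →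
        A * X' + X' * A_rᵀ + X * ξᵀ = 0 →
        Aᵀ * Y' + Y' * A_r + Y * ξ = 0 →
        A_r * P' + P' * A_rᵀ + ξ * P + P * ξᵀ = 0 →
        A_rᵀ * Q' + Q' * A_r + ξᵀ * Q + Q * ξ = 0 →
        frobNorm (Q' * P + Q * P' + Y'ᵀ * X + Yᵀ * X') ≤
          (c₁ + c₂ * frobNorm B_r * frobNorm C_r) *
            frobNorm B_r * frobNorm C_r * frobNorm ξ := by
  -- four operator families
  obtain ⟨K₁, hK₁, hb₁⟩ := family_bound S hSne hScpt (fun _ => A) (fun M => Mᵀ)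
    continuous_const (continuous_id.matrix_transpose)
    (fun M hM => ⟨hA, by rw [Matrix.transpose_transpose]; exact hSstable M hM⟩)
  obtain ⟨K₂, hK₂, hb₂⟩ := family_bound S hSne hScpt (fun _ => Aᵀ) (fun M => M)
    continuous_const continuous_id
    (fun M hM => ⟨isStable_transpose hA, isStable_transpose (hSstable M hM)⟩)
  obtain ⟨K₃, hK₃, hb₃⟩ := family_bound S hSne hScpt (fun M => M) (fun M => Mᵀ)
    continuous_id (continuous_id.matrix_transpose)
    (fun M hM => ⟨hSstable M hM, by rw [Matrix.transpose_transpose]; exact hSstable M hM⟩)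
  obtain ⟨K₄, hK₄, hb₄⟩ := family_bound S hSne hScpt (fun M => Mᵀ) (fun M => M)
    continuous_id.matrix_transpose continuous_id
    (fun M hM => ⟨isStable_transpose (hSstable M hM), isStable_transpose (hSstable M hM)⟩)
  set K : ℝ := max (max K₁ K₂) (max K₃ K₄) with hKdef
  have hK1K : K₁ ≤ K := le_trans (le_max_left _ _) (le_max_left _ _)
  have hK2K : K₂ ≤ K := le_trans (le_max_right _ _) (le_max_left _ _)
  have hK3K : K₃ ≤ K := le_trans (le_max_left _ _) (le_max_right _ _)
  have hK4K : K₄ ≤ K := le_trans (le_max_right _ _) (le_max_right _ _)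
  have hKpos : 0 < K := lt_of_lt_of_le hK₁ hK1K
  have hBC : 0 ≤ 2 * K ^ 3 * frobNorm B * frobNorm C :=
    mul_nonneg (mul_nonneg (by positivity) (frobNorm_nonneg B)) (frobNorm_nonneg C)
  refine ⟨2 * K ^ 3 * frobNorm B * frobNorm C + 1, by linarith, 4 * K ^ 3, by positivity, ?_⟩
  intro A_r hAr B_r C_r ξ X Y X' Y' P Q P' Q' hX hY hP hQ hX' hY' hP' hQ'
  set β := frobNorm B with hβ
  set γ := frobNorm C with hγ
  set bb := frobNorm B_r with hbb
  set cc := frobNorm C_r with hcc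
  set tt := frobNorm ξ with htt
  have hβ0 : 0 ≤ β := frobNorm_nonneg _
  have hγ0 : 0 ≤ γ := frobNorm_nonneg _
  have hb0 : 0 ≤ bb := frobNorm_nonneg _
  have hc0 : 0 ≤ cc := frobNorm_nonneg _
  have ht0 : 0 ≤ tt := frobNorm_nonneg _
  -- bound for X
  have hXb : frobNorm X ≤ K * (β * bb) := by
    refine le_scale hK1K ?_ (frobNorm_nonneg _) hKpos.le (hb₁ A_r hAr X (B * B_rᵀ) hX)
    calc frobNorm (B * B_rᵀ) ≤ β * frobNorm B_rᵀ := frobNorm_mul_le _ _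
      _ = β * bb := by rw [frobNorm_transpose]
  -- bound for Y
  have hYb : frobNorm Y ≤ K * (γ * cc) := by
    have hYeq : Aᵀ * Y + Y * A_r + (-(Cᵀ * C_r)) = 0 := by
      rw [← sub_eq_add_neg]; exact hY
    refine le_scale hK2K ?_ (frobNorm_nonneg _) hKpos.le (hb₂ A_r hAr Y (-(Cᵀ * C_r)) hYeq)
    rw [frobNorm_neg]
    calc frobNorm (Cᵀ * C_r) ≤ frobNorm Cᵀ * cc := frobNorm_mul_le _ _
      _ = γ * cc := by rw [frobNorm_transpose]
  -- bound for P
  have hPb : frobNorm P ≤ K * (bb * bb) := by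
    refine le_scale hK3K ?_ (frobNorm_nonneg _) hKpos.le (hb₃ A_r hAr P (B_r * B_rᵀ) hP)
    calc frobNorm (B_r * B_rᵀ) ≤ bb * frobNorm B_rᵀ := frobNorm_mul_le _ _
      _ = bb * bb := by rw [frobNorm_transpose]
  -- bound for Q
  have hQb : frobNorm Q ≤ K * (cc * cc) := by
    refine le_scale hK4K ?_ (frobNorm_nonneg _) hKpos.le (hb₄ A_r hAr Q (C_rᵀ * C_r) hQ)
    calc frobNorm (C_rᵀ * C_r) ≤ frobNorm C_rᵀ * cc := frobNorm_mul_le _ _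
      _ = cc * cc := by rw [frobNorm_transpose]
  -- bound for X'
  have hX'b : frobNorm X' ≤ K * (K * (β * bb) * tt) := by
    refine le_scale hK1K ?_ (frobNorm_nonneg _) hKpos.le (hb₁ A_r hAr X' (X * ξᵀ) hX')
    calc frobNorm (X * ξᵀ) ≤ frobNorm X * frobNorm ξᵀ := frobNorm_mul_le _ _
      _ = frobNorm X * tt := by rw [frobNorm_transpose]
      _ ≤ K * (β * bb) * tt := mul_le_mul_of_nonneg_right hXb ht0
  -- bound for Y'
  have hY'b : frobNorm Y' ≤ K * (K * (γ * cc) * tt) := by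
    refine le_scale hK2K ?_ (frobNorm_nonneg _) hKpos.le (hb₂ A_r hAr Y' (Y * ξ) hY')
    calc frobNorm (Y * ξ) ≤ frobNorm Y * tt := frobNorm_mul_le _ _
      _ ≤ K * (γ * cc) * tt := mul_le_mul_of_nonneg_right hYb ht0
  -- bound for P'
  have hP'b : frobNorm P' ≤ K * (2 * (K * (bb * bb)) * tt) := by
    have hPeq : A_r * P' + P' * A_rᵀ + (ξ * P + P * ξᵀ) = 0 := by
      rw [← add_assoc]; exact hP'
    refine le_scale hK3K ?_ (frobNorm_nonneg _) hKpos.le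
      (hb₃ A_r hAr P' (ξ * P + P * ξᵀ) hPeq)
    calc frobNorm (ξ * P + P * ξᵀ) ≤ frobNorm (ξ * P) + frobNorm (P * ξᵀ) :=
          frobNorm_add_le _ _
      _ ≤ tt * frobNorm P + frobNorm P * frobNorm ξᵀ :=
          add_le_add (frobNorm_mul_le _ _) (frobNorm_mul_le _ _)
      _ = 2 * frobNorm P * tt := by rw [frobNorm_transpose]; ring
      _ ≤ 2 * (K * (bb * bb)) * tt := by
          apply mul_le_mul_of_nonneg_right _ ht0
          linarith [hPb]
  -- bound for Q'
  have hQ'b : frobNorm Q' ≤ K * (2 * (K * (cc * cc)) * tt) := by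
    have hQeq : A_rᵀ * Q' + Q' * A_r + (ξᵀ * Q + Q * ξ) = 0 := by
      rw [← add_assoc]; exact hQ'
    refine le_scale hK4K ?_ (frobNorm_nonneg _) hKpos.le
      (hb₄ A_r hAr Q' (ξᵀ * Q + Q * ξ) hQeq)
    calc frobNorm (ξᵀ * Q + Q * ξ) ≤ frobNorm (ξᵀ * Q) + frobNorm (Q * ξ) :=
          frobNorm_add_le _ _
      _ ≤ frobNorm ξᵀ * frobNorm Q + frobNorm Q * tt :=
          add_le_add (frobNorm_mul_le _ _) (frobNorm_mul_le _ _)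
      _ = 2 * frobNorm Q * tt := by rw [frobNorm_transpose]; ring
      _ ≤ 2 * (K * (cc * cc)) * tt := by
          apply mul_le_mul_of_nonneg_right _ ht0
          linarith [hQb]
  -- triangle inequality on the Hessian
  have htri : frobNorm (Q' * P + Q * P' + Y'ᵀ * X + Yᵀ * X') ≤
      frobNorm Q' * frobNorm P + frobNorm Q * frobNorm P' +
      frobNorm Y' * frobNorm X + frobNorm Y * frobNorm X' := by
    calc frobNorm (Q' * P + Q * P' + Y'ᵀ * X + Yᵀ * X')
        ≤ frobNorm (Q' * P + Q * P' + Y'ᵀ * X) + frobNorm (Yᵀ * X') := frobNorm_add_le _ _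
      _ ≤ frobNorm (Q' * P + Q * P') + frobNorm (Y'ᵀ * X) + frobNorm (Yᵀ * X') := by
          linarith [frobNorm_add_le (Q' * P + Q * P') (Y'ᵀ * X)]
      _ ≤ frobNorm (Q' * P) + frobNorm (Q * P') + frobNorm (Y'ᵀ * X) + frobNorm (Yᵀ * X') := by
          linarith [frobNorm_add_le (Q' * P) (Q * P')]
      _ ≤ frobNorm Q' * frobNorm P + frobNorm Q * frobNorm P' +
          frobNorm Y'ᵀ * frobNorm X + frobNorm Yᵀ * frobNorm X' := by
          linarith [frobNorm_mul_le Q' P, frobNorm_mul_le Q P',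
            frobNorm_mul_le Y'ᵀ X, frobNorm_mul_le Yᵀ X']
      _ = frobNorm Q' * frobNorm P + frobNorm Q * frobNorm P' +
          frobNorm Y' * frobNorm X + frobNorm Y * frobNorm X' := by
          rw [frobNorm_transpose, frobNorm_transpose]
  -- combine
  have h1 : frobNorm Q' * frobNorm P ≤ (K * (2 * (K * (cc * cc)) * tt)) * (K * (bb * bb)) :=
    mul_le_mul hQ'b hPb (frobNorm_nonneg _) (by positivity)
  have h2 : frobNorm Q * frobNorm P' ≤ (K * (cc * cc)) * (K * (2 * (K * (bb * bb)) * tt)) :=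
    mul_le_mul hQb hP'b (frobNorm_nonneg _) (by positivity)
  have h3 : frobNorm Y' * frobNorm X ≤ (K * (K * (γ * cc) * tt)) * (K * (β * bb)) :=
    mul_le_mul hY'b hXb (frobNorm_nonneg _) (by positivity)
  have h4 : frobNorm Y * frobNorm X' ≤ (K * (γ * cc)) * (K * (K * (β * bb) * tt)) :=
    mul_le_mul hYb hX'b (frobNorm_nonneg _) (by positivity)
  have hfinal : (K * (2 * (K * (cc * cc)) * tt)) * (K * (bb * bb)) +
      (K * (cc * cc)) * (K * (2 * (K * (bb * bb)) * tt)) +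
      (K * (K * (γ * cc) * tt)) * (K * (β * bb)) +
      (K * (γ * cc)) * (K * (K * (β * bb) * tt)) ≤
      (2 * K ^ 3 * β * γ + 1 + 4 * K ^ 3 * bb * cc) * bb * cc * tt := by
    have hbct : 0 ≤ bb * cc * tt := by positivity
    have hkey : (2 * K ^ 3 * β * γ + 1 + 4 * K ^ 3 * bb * cc) * bb * cc * tt =
        (K * (2 * (K * (cc * cc)) * tt)) * (K * (bb * bb)) +
        (K * (cc * cc)) * (K * (2 * (K * (bb * bb)) * tt)) +
        (K * (K * (γ * cc) * tt)) * (K * (β * bb)) +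
        (K * (γ * cc)) * (K * (K * (β * bb) * tt)) + bb * cc * tt := by ring
    rw [hkey]
    linarith
  linarith [htri, h1, h2, h3, h4, hfinal]
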